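/- Second difference operator formula (Proposition 4.1, part 2): for every Schwartz function κ : ℝ⁴ → ℂ, every Schwartz function h : ℝ → ℂ, every λ ∈ ℝ \ {0}, and u ∈ ℝ, the function μ ↦ (π_{λ,μ}(κ)h)(u) is differentiable on ℝ, and ∂_μ (π_{λ,μ}(κ)h)(u) = (i/(2λ)) (π_{λ,μ}(x₂κ)h)(u); equivalently Δ_{x₂}π_{λ,μ}(κ) = (2λ/i) ∂_μ π_{λ,μ}(κ). -/

import Mathlib

open MeasureTheory Complex

noncomputable section

instance : (volume : Measure (ℝ×ℝ)).IsAddHaarMeasure := Measure.prod.instIsAddHaarMeasure _ _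
instance : (volume : Measure (ℝ×ℝ×ℝ)).IsAddHaarMeasure := Measure.prod.instIsAddHaarMeasure _ _
instance : (volume : Measure (ℝ×ℝ×ℝ×ℝ)).IsAddHaarMeasure := Measure.prod.instIsAddHaarMeasure _ _

/-- The group Fourier transform on the Engel group:
`(π_{λ,μ}(κ)h)(u) = ∫_{ℝ⁴} κ(x) exp(i((μ/(2λ))x₂ − λx₄ + λx₃(u−x₁) − (λ/2)x₂(u−x₁)²)) h(u−x₁) dx`. -/
def piF (lam mu : ℝ) (κ : ℝ × ℝ × ℝ × ℝ → ℂ) (h : ℝ → ℂ) (u : ℝ) : ℂ :=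
  ∫ x : ℝ × ℝ × ℝ × ℝ,
    κ x * Complex.exp (Complex.I *
      (((mu / (2 * lam)) * x.2.1 - lam * x.2.2.2 + lam * x.2.2.1 * (u - x.1)
        - (lam / 2) * x.2.1 * (u - x.1) ^ 2 : ℝ) : ℂ)) * h (u - x.1)

/-- Second difference operator formula (Proposition 4.1, part 2): for every Schwartz `κ`
and `h`, every `λ ≠ 0` and `u`, the map `μ ↦ (π_{λ,μ}(κ)h)(u)` is differentiable on `ℝ`
with `∂_μ (π_{λ,μ}(κ)h)(u) = (i/(2λ)) (π_{λ,μ}(x₂κ)h)(u)`; equivalently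
`Δ_{x₂}π_{λ,μ}(κ) = (2λ/i) ∂_μ π_{λ,μ}(κ)`. -/
theorem engel_difference_operator_x2 :
    ∀ κ : SchwartzMap (ℝ × ℝ × ℝ × ℝ) ℂ, ∀ h : SchwartzMap ℝ ℂ,
      ∀ lam : ℝ, lam ≠ 0 → ∀ u : ℝ, ∀ mu : ℝ,
        HasDerivAt (fun m : ℝ => piF lam m κ h u)
          ((Complex.I / (2 * (lam : ℂ))) *
            piF lam mu (fun x => (x.2.1 : ℂ) * κ x) h u) mu := by
  intro κ h lam hlam u mu
  have hlam' : (lam : ℂ) ≠ 0 := by exact_mod_cast hlam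
  set c : ℝ → ℝ × ℝ × ℝ × ℝ → ℝ := fun m x =>
    (m / (2 * lam)) * x.2.1 - lam * x.2.2.2 + lam * x.2.2.1 * (u - x.1)
      - (lam / 2) * x.2.1 * (u - x.1) ^ 2 with hc
  set F : ℝ → ℝ × ℝ × ℝ × ℝ → ℂ := fun m x =>
    κ x * Complex.exp (Complex.I * ((c m x : ℝ) : ℂ)) * h (u - x.1) with hF
  set F' : ℝ → ℝ × ℝ × ℝ × ℝ → ℂ := fun m x =>
    (Complex.I / (2 * (lam : ℂ))) *
      (((x.2.1 : ℂ) * κ x) * Complex.exp (Complex.I * ((c m x : ℝ) : ℂ)) * h (u - x.1)) with hF'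
  -- sup bound for h
  set C : ℝ := SchwartzMap.seminorm ℝ 0 0 h with hCdef
  have hC : ∀ y : ℝ, ‖h y‖ ≤ C := fun y => h.norm_le_seminorm ℝ y
  have hC0 : 0 ≤ C := le_trans (norm_nonneg _) (hC 0)
  -- norm of the oscillatory factor is 1
  have hexp : ∀ (r : ℝ), ‖Complex.exp (Complex.I * (r : ℂ))‖ = 1 := by
    intro r
    rw [Complex.norm_exp]
    simp [Complex.mul_re]
  -- continuity of c in x (for fixed m)
  have hccont : ∀ m : ℝ, Continuous fun x : ℝ × ℝ × ℝ × ℝ => c m x := by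
    intro m; rw [hc]; fun_prop
  have hmeasF : ∀ m : ℝ, AEStronglyMeasurable (F m) volume := by
    intro m
    exact ((κ.continuous.mul (Complex.continuous_exp.comp
      ((continuous_const.mul (Complex.continuous_ofReal.comp (hccont m)))))).mul
      (h.continuous.comp (continuous_const.sub continuous_fst))).aestronglyMeasurable
  have hmeasF' : AEStronglyMeasurable (F' mu) volume := by
    refine (Continuous.aestronglyMeasurable ?_)
    refine continuous_const.mul ?_
    exact (((Complex.continuous_ofReal.comp (continuous_fst.comp continuous_snd)).mul
      κ.continuous).mul (Complex.continuous_exp.comp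
      (continuous_const.mul (Complex.continuous_ofReal.comp (hccont mu))))).mul
      (h.continuous.comp (continuous_const.sub continuous_fst))
  -- integrability of F mu
  have hintF : Integrable (F mu) volume := by
    refine (κ.integrable.norm.const_mul C).mono' (hmeasF mu) ?_
    filter_upwards with x
    rw [hF]
    simp only
    rw [norm_mul, norm_mul, hexp, mul_one]
    calc ‖κ x‖ * ‖h (u - x.1)‖ ≤ ‖κ x‖ * C :=
          mul_le_mul_of_nonneg_left (hC _) (norm_nonneg _)
      _ = C * ‖κ x‖ := mul_comm _ _
  -- the dominating bound
  set bound : ℝ × ℝ × ℝ × ℝ → ℝ := fun x => (C / (2 * |lam|)) * (‖x‖ ^ 1 * ‖κ x‖) with hbd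
  have hbound_int : Integrable bound volume :=
    (κ.integrable_pow_mul volume 1).const_mul _
  have hnormF' : ∀ (m : ℝ) (x : ℝ × ℝ × ℝ × ℝ), ‖F' m x‖ ≤ bound x := by
    intro m x
    rw [hF']
    simp only
    rw [norm_mul, norm_mul, norm_mul, norm_mul, hexp, mul_one]
    have h1 : ‖Complex.I / (2 * (lam : ℂ))‖ = 1 / (2 * |lam|) := by
      rw [norm_div, Complex.norm_I, norm_mul]
      simp [Complex.norm_real]
    have h2 : ‖((x.2.1 : ℝ) : ℂ)‖ ≤ ‖x‖ := by
      rw [Complex.norm_real]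
      exact le_trans (norm_fst_le x.2) (norm_snd_le x)
    rw [h1, hbd]
    simp only [pow_one]
    calc 1 / (2 * |lam|) * (‖((x.2.1 : ℝ) : ℂ)‖ * ‖κ x‖ * ‖h (u - x.1)‖)
        ≤ 1 / (2 * |lam|) * (‖x‖ * ‖κ x‖ * C) := by
          apply mul_le_mul_of_nonneg_left _ (by positivity)
          exact mul_le_mul (mul_le_mul_of_nonneg_right h2 (norm_nonneg _)) (hC _)
            (norm_nonneg _) (by positivity)
      _ = C / (2 * |lam|) * (‖x‖ * ‖κ x‖) := by ring
  -- pointwise derivative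
  have hderiv : ∀ (m : ℝ) (x : ℝ × ℝ × ℝ × ℝ),
      HasDerivAt (fun m' : ℝ => F m' x) (F' m x) m := by
    intro m x
    have h0 : HasDerivAt (fun m' : ℝ => c m' x) (x.2.1 / (2 * lam)) m := by
      have h0' : HasDerivAt (fun m' : ℝ => m' * (x.2.1 / (2 * lam)) +
          (- lam * x.2.2.2 + lam * x.2.2.1 * (u - x.1)
            - (lam / 2) * x.2.1 * (u - x.1) ^ 2)) (x.2.1 / (2 * lam)) m := by
        simpa using ((hasDerivAt_id m).mul_const (x.2.1 / (2 * lam))).add_const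
          (- lam * x.2.2.2 + lam * x.2.2.1 * (u - x.1)
            - (lam / 2) * x.2.1 * (u - x.1) ^ 2)
      have heq : (fun m' : ℝ => c m' x) = fun m' : ℝ => m' * (x.2.1 / (2 * lam)) +
          (- lam * x.2.2.2 + lam * x.2.2.1 * (u - x.1)
            - (lam / 2) * x.2.1 * (u - x.1) ^ 2) := by
        funext m'; rw [hc]; ring
      rw [heq]; exact h0'
    have h1 : HasDerivAt (fun m' : ℝ => ((c m' x : ℝ) : ℂ))
        (((x.2.1 / (2 * lam) : ℝ) : ℂ)) m := h0.ofReal_comp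
    have h2 := ((h1.const_mul Complex.I).cexp.const_mul (κ x)).mul_const (h (u - x.1))
    have heq2 : κ x * (Complex.exp (Complex.I * ((c m x : ℝ) : ℂ)) *
        (Complex.I * ((x.2.1 / (2 * lam) : ℝ) : ℂ))) * h (u - x.1) = F' m x := by
      rw [hF']
      push_cast
      field_simp
    rw [hF]
    simp only
    rw [← heq2]
    exact h2
  -- apply dominated differentiation
  have key := hasDerivAt_integral_of_dominated_loc_of_deriv_le (s := Metric.ball mu 1) (Metric.ball_mem_nhds mu one_pos)
    (Filter.Eventually.of_forall fun m => hmeasF m) hintF hmeasF'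
    (Filter.Eventually.of_forall fun x m _ => hnormF' m x) hbound_int
    (Filter.Eventually.of_forall fun x m _ => hderiv m x)
  have hfinal : (∫ x, F' mu x) = (Complex.I / (2 * (lam : ℂ))) *
      piF lam mu (fun x => (x.2.1 : ℂ) * κ x) h u := by
    rw [piF, ← integral_const_mul]
  exact hfinal ▸ key.2
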